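/- Let T₁, T₂ be states (positive trace-one operators) on L²(ℝ). If G_{T₁}(Z) = G_{T₂}(Z) for all Borel Z ⊆ ℝ², then T₁ = T₂, assuming there exists a state S for which G_S is informationally complete (i.e., tr[T G_S(Z)] = tr[T' G_S(Z)] for all Z implies T = T'). -/

import Mathlib

open MeasureTheory

local notation "H" => Lp ℂ 2 (volume : Measure ℝ)

open Complex

private lemma exp_arith7 (u v : ℂ) (p q x : ℝ) :
    (starRingEnd ℂ) (Complex.exp (Complex.I * (q * p / 2))) *
      ((starRingEnd ℂ) (v) *
        (Complex.exp (Complex.I * (-q * -p / 2)) * Complex.exp (Complex.I * (-p * (x - q)))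
          * u))
    = Complex.exp (Complex.I * (q * p / 2)) * Complex.exp (Complex.I * (p * q)) *
        (starRingEnd ℂ) ((starRingEnd ℂ) u *
          (Complex.exp (Complex.I * (q * p / 2)) * Complex.exp (Complex.I * (p * x)) * v)) := by
  simp only [map_mul, ← Complex.exp_conj, map_div₀, map_ofNat, Complex.conj_I, Complex.conj_ofReal,
    RingHomCompTriple.comp_apply, RingHom.id_apply]
  have h : ∀ a b : ℂ, cexp a * cexp b = cexp (a + b) := fun a b => (Complex.exp_add a b).symm
  calc (cexp (-I * (↑q * ↑p / 2))) * ((starRingEnd ℂ) v *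
        (cexp (I * (-↑q * -↑p / 2)) * cexp (I * (-↑p * (↑x - ↑q))) * u))
      = cexp (-I * (↑q * ↑p / 2)) * cexp (I * (-↑q * -↑p / 2)) * cexp (I * (-↑p * (↑x - ↑q)))
          * ((starRingEnd ℂ) v * u) := by ring
    _ = cexp (-Complex.I * (↑q * ↑p / 2) + Complex.I * (-↑q * -↑p / 2)
          + Complex.I * (-↑p * (↑x - ↑q))) * ((starRingEnd ℂ) v * u) := by rw [h, h]
    _ = cexp (Complex.I * (↑q * ↑p / 2) + Complex.I * (↑p * ↑q) + (-Complex.I * (↑q * ↑p / 2)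
          + -Complex.I * (↑p * ↑x))) * ((starRingEnd ℂ) v * u) := by
        congr 1; ring
    _ = cexp (I * (↑q * ↑p / 2)) * cexp (I * (↑p * ↑q)) * (u * (cexp (-I * (↑q * ↑p / 2))
          * cexp (-I * (↑p * ↑x)) * (starRingEnd ℂ) v)) := by
        rw [Complex.exp_add, Complex.exp_add, Complex.exp_add]; ring

private lemma qmpT7 : Measure.QuasiMeasurePreserving (fun w : (ℝ × ℝ) × ℝ => w.2 - w.1.1)
    ((volume : Measure (ℝ × ℝ)).prod (volume : Measure ℝ)) (volume : Measure ℝ) := by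
  have hm : Measurable (fun w : (ℝ × ℝ) × ℝ => w.2 - w.1.1) :=
    measurable_snd.sub (measurable_fst.fst)
  refine ⟨hm, Measure.AbsolutelyContinuous.mk fun N hN h0 => ?_⟩
  rw [Measure.map_apply hm hN, Measure.prod_apply (hm hN)]
  have : ∀ z : ℝ × ℝ, (volume : Measure ℝ)
      (Prod.mk z ⁻¹' ((fun w : (ℝ × ℝ) × ℝ => w.2 - w.1.1) ⁻¹' N)) = 0 := by
    intro z
    have : (Prod.mk z ⁻¹' ((fun w : (ℝ × ℝ) × ℝ => w.2 - w.1.1) ⁻¹' N))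
        = (fun x : ℝ => x - z.1) ⁻¹' N := rfl
    rw [this, (measurePreserving_sub_right volume z.1).measure_preimage hN.nullMeasurableSet]
    exact h0
  simp [this]

section Aux

variable (W : ℝ × ℝ → (H →L[ℂ] H))
  (hW : ∀ q p : ℝ, ∀ ψ : H,
      (⇑(W (q, p) ψ) : ℝ → ℂ) =ᵐ[volume]
        fun x => Complex.exp (Complex.I * (q * p / 2)) * Complex.exp (Complex.I * (p * x))
          * ψ (x - q))

include hW

private lemma aux_inner7 (u ψ : H) (q p : ℝ) :
    (inner ℂ u (W (q, p) ψ) : ℂ)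
      = ∫ x : ℝ, (starRingEnd ℂ) (u x) *
          (Complex.exp (Complex.I * (q * p / 2)) * Complex.exp (Complex.I * (p * x))
            * ψ (x - q)) := by
  rw [MeasureTheory.L2.inner_def]
  refine integral_congr_ae ?_
  filter_upwards [hW q p ψ] with x hx
  rw [RCLike.inner_apply, hx]
  ring

private lemma aux_norm7 (ψ : H) (z : ℝ × ℝ) : ‖W z ψ‖ = ‖ψ‖ := by
  obtain ⟨q, p⟩ := z
  rw [Lp.norm_def, Lp.norm_def]
  congr 1
  rw [eLpNorm_congr_ae (hW q p ψ)]
  have h1 : eLpNorm (fun x : ℝ => Complex.exp (Complex.I * (q * p / 2))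
      * Complex.exp (Complex.I * (p * x)) * ψ (x - q)) 2 volume
      = eLpNorm ((⇑ψ) ∘ (fun x : ℝ => x - q)) 2 volume := by
    refine eLpNorm_congr_norm_ae (ae_of_all _ fun x => ?_)
    simp [Complex.norm_exp, Function.comp]
  rw [h1, eLpNorm_comp_measurePreserving (Lp.aestronglyMeasurable ψ)
    (measurePreserving_sub_right volume q)]

private lemma aux_symm7 (u v : H) (z : ℝ × ℝ) :
    ‖(inner ℂ u (W z v) : ℂ)‖ = ‖(inner ℂ v (W (-z) u) : ℂ)‖ := by
  obtain ⟨q, p⟩ := z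
  have h1 := aux_inner7 W hW u v q p
  have h2 := aux_inner7 W hW v u (-q) (-p)
  set f : ℝ → ℂ := fun x => (starRingEnd ℂ) (u x) *
    (Complex.exp (Complex.I * (q * p / 2)) * Complex.exp (Complex.I * (p * x)) * v (x - q))
    with hf
  set g : ℝ → ℂ := fun y => (starRingEnd ℂ) (v y) *
    (Complex.exp (Complex.I * ((-q : ℝ) * (-p : ℝ) / 2)) * Complex.exp (Complex.I * ((-p : ℝ) * y))
      * u (y - (-q : ℝ))) with hg
  have key : (starRingEnd ℂ) (Complex.exp (Complex.I * (q * p / 2))) * ∫ y, g y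
      = Complex.exp (Complex.I * (q * p / 2)) * Complex.exp (Complex.I * (p * q)) *
          (starRingEnd ℂ) (∫ x, f x) := by
    rw [← integral_sub_right_eq_self g q, ← integral_const_mul, ← integral_conj,
      ← integral_const_mul]
    refine integral_congr_ae (ae_of_all _ fun x => ?_)
    have := exp_arith7 (u x) (v (x - q)) p q x
    simp only [hf, hg]
    push_cast
    convert this using 3 <;> push_cast <;> ring_nf
  have hn1 : ‖Complex.exp (Complex.I * ((q : ℂ) * p / 2))‖ = 1 := by
    simp [Complex.norm_exp]
  have hn2 : ‖Complex.exp (Complex.I * ((p : ℂ) * q))‖ = 1 := by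
    simp [Complex.norm_exp]
  have hkey := congrArg norm key
  rw [norm_mul, norm_mul, norm_mul, RCLike.norm_conj, RCLike.norm_conj, hn1, hn2,
    one_mul, one_mul, one_mul] at hkey
  rw [show -(q, p) = (-q, -p) from rfl, h1, h2]
  rw [← hkey]

private lemma aux_meas7 (u ψ : H) :
    AEStronglyMeasurable (fun z : ℝ × ℝ => (inner ℂ u (W z ψ) : ℂ)) (volume : Measure (ℝ × ℝ)) := by
  have heq : (fun z : ℝ × ℝ => (inner ℂ u (W z ψ) : ℂ))
      = fun z : ℝ × ℝ => ∫ x : ℝ, (starRingEnd ℂ) (u x) *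
          (Complex.exp (Complex.I * (z.1 * z.2 / 2)) * Complex.exp (Complex.I * (z.2 * x))
            * ψ (x - z.1)) := by
    funext z
    cases z with
    | mk q p => exact aux_inner7 W hW u ψ q p
  rw [heq]
  have hF : AEStronglyMeasurable
      (fun w : (ℝ × ℝ) × ℝ => (starRingEnd ℂ) (u w.2) *
        (Complex.exp (Complex.I * (w.1.1 * w.1.2 / 2)) * Complex.exp (Complex.I * (w.1.2 * w.2))
          * ψ (w.2 - w.1.1)))
      ((volume : Measure (ℝ × ℝ)).prod (volume : Measure ℝ)) := by
    have h1 : AEStronglyMeasurable (fun w : (ℝ × ℝ) × ℝ => (starRingEnd ℂ) (u w.2))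
        ((volume : Measure (ℝ × ℝ)).prod (volume : Measure ℝ)) :=
      Complex.continuous_conj.comp_aestronglyMeasurable
        ((Lp.aestronglyMeasurable u).comp_quasiMeasurePreserving
          Measure.quasiMeasurePreserving_snd)
    have h2 : AEStronglyMeasurable
        (fun w : (ℝ × ℝ) × ℝ => Complex.exp (Complex.I * (w.1.1 * w.1.2 / 2))
          * Complex.exp (Complex.I * (w.1.2 * w.2)))
        ((volume : Measure (ℝ × ℝ)).prod (volume : Measure ℝ)) := by
      refine Continuous.aestronglyMeasurable ?_
      fun_prop
    have h3 : AEStronglyMeasurable (fun w : (ℝ × ℝ) × ℝ => (ψ : ℝ → ℂ) (w.2 - w.1.1))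
        ((volume : Measure (ℝ × ℝ)).prod (volume : Measure ℝ)) :=
      (Lp.aestronglyMeasurable ψ).comp_quasiMeasurePreserving qmpT7
    exact h1.mul (h2.mul h3)
  have := hF.integral_prod_right'
  simpa [mul_assoc] using this

private lemma aux_fprops7 (lam : ℕ → ℝ) (ψs : ℕ → H) (hlam : ∀ i, 0 ≤ lam i)
    (h1 : HasSum lam 1) (hψ : ∀ i, ‖ψs i‖ = 1) (u : H) :
    AEStronglyMeasurable
        (fun z : ℝ × ℝ => ∑' j, lam j * ‖(inner ℂ u (W z (ψs j)) : ℂ)‖ ^ 2)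
        (volume : Measure (ℝ × ℝ))
      ∧ (∀ z : ℝ × ℝ, 0 ≤ ∑' j, lam j * ‖(inner ℂ u (W z (ψs j)) : ℂ)‖ ^ 2)
      ∧ (∀ z : ℝ × ℝ, (∑' j, lam j * ‖(inner ℂ u (W z (ψs j)) : ℂ)‖ ^ 2) ≤ ‖u‖ ^ 2) := by
  have hnn : ∀ (j : ℕ) (z : ℝ × ℝ), 0 ≤ lam j * ‖(inner ℂ u (W z (ψs j)) : ℂ)‖ ^ 2 :=
    fun j z => mul_nonneg (hlam j) (by positivity)
  have hb : ∀ (j : ℕ) (z : ℝ × ℝ),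
      lam j * ‖(inner ℂ u (W z (ψs j)) : ℂ)‖ ^ 2 ≤ lam j * ‖u‖ ^ 2 := by
    intro j z
    refine mul_le_mul_of_nonneg_left ?_ (hlam j)
    refine pow_le_pow_left₀ (norm_nonneg _) ?_ 2
    calc ‖(inner ℂ u (W z (ψs j)) : ℂ)‖ ≤ ‖u‖ * ‖W z (ψs j)‖ := norm_inner_le_norm _ _
      _ = ‖u‖ := by rw [aux_norm7 W hW, hψ j, mul_one]
  have hsumm : ∀ z : ℝ × ℝ, Summable (fun j => lam j * ‖(inner ℂ u (W z (ψs j)) : ℂ)‖ ^ 2) :=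
    fun z => Summable.of_nonneg_of_le (fun j => hnn j z) (fun j => hb j z)
      (h1.summable.mul_right _)
  have h0 : ∀ z : ℝ × ℝ, 0 ≤ ∑' j, lam j * ‖(inner ℂ u (W z (ψs j)) : ℂ)‖ ^ 2 :=
    fun z => tsum_nonneg (fun j => hnn j z)
  refine ⟨?_, h0, ?_⟩
  · have gmeas : ∀ j : ℕ, AEMeasurable
        (fun z : ℝ × ℝ => lam j * ‖(inner ℂ u (W z (ψs j)) : ℂ)‖ ^ 2)
        (volume : Measure (ℝ × ℝ)) := fun j =>
      (((aux_meas7 W hW u (ψs j)).aemeasurable.norm).pow_const 2).const_mul (lam j)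
    have heq : (fun z : ℝ × ℝ => ∑' j, lam j * ‖(inner ℂ u (W z (ψs j)) : ℂ)‖ ^ 2)
        = fun z : ℝ × ℝ =>
            (∑' j, ENNReal.ofReal (lam j * ‖(inner ℂ u (W z (ψs j)) : ℂ)‖ ^ 2)).toReal := by
      funext z
      rw [← ENNReal.ofReal_tsum_of_nonneg (fun j => hnn j z) (hsumm z),
        ENNReal.toReal_ofReal (h0 z)]
    rw [heq]
    exact ((AEMeasurable.ennreal_tsum (fun j => (gmeas j).ennreal_ofReal)).ennreal_toReal
      ).aestronglyMeasurable
  · intro z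
    calc (∑' j, lam j * ‖(inner ℂ u (W z (ψs j)) : ℂ)‖ ^ 2) ≤ ∑' j, lam j * ‖u‖ ^ 2 :=
          Summable.tsum_le_tsum (fun j => hb j z) (hsumm z) (h1.summable.mul_right _)
      _ = ‖u‖ ^ 2 := by rw [tsum_mul_right, h1.tsum_eq, one_mul]

end Aux

/-- If the covariant phase space observables `G_{T₁}` and `G_{T₂}` generated by the states
`T₁ = Σ lam₁_j |ψ₁_j⟩⟨ψ₁_j|` and `T₂ = Σ lam₂_j |ψ₂_j⟩⟨ψ₂_j|` coincide, then `T₁ = T₂`,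
assuming there is a state `S = Σ μ_i |φ_i⟩⟨φ_i|` for which `G_S` is informationally
complete.  All operators are expressed weakly via matrix elements: the equality
`G_{T₁} = G_{T₂}` via `⟨u, G_{T}(Z)u⟩ = (1/2π)∫_Z Σ_j λ_j |⟨u, W(z)ψ_j⟩|² dz`,
informational completeness via `tr[T G_S(Z)] = (1/2π)∫_Z Σ_{ij} κ_i μ_j |⟨χ_i, W(z)φ_j⟩|² dz`,
and equality of states via equality of all matrix elements `⟨u, T v⟩`. -/
theorem stmt7
    (W : ℝ × ℝ → (H →L[ℂ] H))
    (hW : ∀ q p : ℝ, ∀ ψ : H,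
      (⇑(W (q, p) ψ) : ℝ → ℂ) =ᵐ[volume]
        fun x => Complex.exp (Complex.I * (q * p / 2)) * Complex.exp (Complex.I * (p * x))
          * ψ (x - q))
    (lam₁ lam₂ μ : ℕ → ℝ) (ψ₁ ψ₂ φ : ℕ → H)
    (hlam₁ : ∀ i, 0 ≤ lam₁ i) (hlam₂ : ∀ i, 0 ≤ lam₂ i) (hμ : ∀ i, 0 ≤ μ i)
    (h₁1 : HasSum lam₁ 1) (h₂1 : HasSum lam₂ 1) (hμ1 : HasSum μ 1)
    (ho₁ : Orthonormal ℂ ψ₁) (ho₂ : Orthonormal ℂ ψ₂) (hoφ : Orthonormal ℂ φ)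
    -- informational completeness of `G_S`:
    (hIC : ∀ (κ κ' : ℕ → ℝ) (χ χ' : ℕ → H),
      (∀ i, 0 ≤ κ i) → (∀ i, 0 ≤ κ' i) → HasSum κ 1 → HasSum κ' 1 →
      Orthonormal ℂ χ → Orthonormal ℂ χ' →
      (∀ Z : Set (ℝ × ℝ), MeasurableSet Z →
        (1 / (2 * Real.pi)) *
            ∫ z in Z, ∑' i, ∑' j, κ i * μ j * ‖(inner ℂ (χ i) (W z (φ j)) : ℂ)‖ ^ 2
              ∂(volume : Measure (ℝ × ℝ))
          = (1 / (2 * Real.pi)) *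
            ∫ z in Z, ∑' i, ∑' j, κ' i * μ j * ‖(inner ℂ (χ' i) (W z (φ j)) : ℂ)‖ ^ 2
              ∂(volume : Measure (ℝ × ℝ))) →
      ∀ u v : H, ∑' i, (κ i : ℂ) * ((inner ℂ u (χ i) : ℂ) * (inner ℂ (χ i) v : ℂ))
        = ∑' i, (κ' i : ℂ) * ((inner ℂ u (χ' i) : ℂ) * (inner ℂ (χ' i) v : ℂ)))
    -- `G_{T₁} = G_{T₂}`:
    (h : ∀ Z : Set (ℝ × ℝ), MeasurableSet Z → ∀ u : H,
      (1 / (2 * Real.pi)) *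
          ∫ z in Z, ∑' j, lam₁ j * ‖(inner ℂ u (W z (ψ₁ j)) : ℂ)‖ ^ 2
            ∂(volume : Measure (ℝ × ℝ))
        = (1 / (2 * Real.pi)) *
          ∫ z in Z, ∑' j, lam₂ j * ‖(inner ℂ u (W z (ψ₂ j)) : ℂ)‖ ^ 2
            ∂(volume : Measure (ℝ × ℝ))) :
    -- conclusion: `T₁ = T₂`
    ∀ u v : H, ∑' i, (lam₁ i : ℂ) * ((inner ℂ u (ψ₁ i) : ℂ) * (inner ℂ (ψ₁ i) v : ℂ))
      = ∑' i, (lam₂ i : ℂ) * ((inner ℂ u (ψ₂ i) : ℂ) * (inner ℂ (ψ₂ i) v : ℂ)) := by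
  -- step 1: from `h`, the densities coincide a.e. for every `u`
  have hae : ∀ u : H,
      (fun z : ℝ × ℝ => ∑' j, lam₁ j * ‖(inner ℂ u (W z (ψ₁ j)) : ℂ)‖ ^ 2)
        =ᵐ[(volume : Measure (ℝ × ℝ))]
      (fun z : ℝ × ℝ => ∑' j, lam₂ j * ‖(inner ℂ u (W z (ψ₂ j)) : ℂ)‖ ^ 2) := by
    intro u
    obtain ⟨hm₁, hp₁, hb₁⟩ := aux_fprops7 W hW lam₁ ψ₁ hlam₁ h₁1 ho₁.1 u
    obtain ⟨hm₂, hp₂, hb₂⟩ := aux_fprops7 W hW lam₂ ψ₂ hlam₂ h₂1 ho₂.1 u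
    have hIntOn : ∀ (f : (ℝ × ℝ) → ℝ), AEStronglyMeasurable f (volume : Measure (ℝ × ℝ)) →
        (∀ z, 0 ≤ f z) → (∀ z, f z ≤ ‖u‖ ^ 2) →
        ∀ s : Set (ℝ × ℝ), MeasurableSet s → (volume : Measure (ℝ × ℝ)) s < ⊤ →
          IntegrableOn f s (volume : Measure (ℝ × ℝ)) := by
      intro f hf h0 hb s _ hs
      refine Integrable.mono' (g := fun _ => ‖u‖ ^ 2)
        (integrableOn_const hs.ne) hf.restrict (ae_of_all _ fun z => ?_)
      rw [Real.norm_eq_abs, _root_.abs_of_nonneg (h0 z)]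
      exact hb z
    refine ae_eq_of_forall_setIntegral_eq_of_sigmaFinite
      (hIntOn _ hm₁ hp₁ hb₁) (hIntOn _ hm₂ hp₂ hb₂) ?_
    intro s hs _
    have h2pi : (1 / (2 * Real.pi) : ℝ) ≠ 0 := by positivity
    exact mul_left_cancel₀ h2pi (h s hs u)
  -- for a.e. z, all matrix densities at `-z` coincide
  have hneg : MeasurePreserving (fun z : ℝ × ℝ => -z)
      (volume : Measure (ℝ × ℝ)) (volume : Measure (ℝ × ℝ)) := by
    have := ((Measure.measurePreserving_neg (volume : Measure ℝ)).prod
      (Measure.measurePreserving_neg (volume : Measure ℝ)))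
    rw [Measure.volume_eq_prod]
    convert this using 1 <;> rfl
  have haej : ∀ᵐ z ∂(volume : Measure (ℝ × ℝ)), ∀ j : ℕ,
      (∑' i, lam₁ i * ‖(inner ℂ (φ j) (W (-z) (ψ₁ i)) : ℂ)‖ ^ 2)
        = ∑' i, lam₂ i * ‖(inner ℂ (φ j) (W (-z) (ψ₂ i)) : ℂ)‖ ^ 2 := by
    have haej0 : ∀ᵐ w ∂(volume : Measure (ℝ × ℝ)), ∀ j : ℕ,
        (∑' i, lam₁ i * ‖(inner ℂ (φ j) (W w (ψ₁ i)) : ℂ)‖ ^ 2)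
          = ∑' i, lam₂ i * ‖(inner ℂ (φ j) (W w (ψ₂ i)) : ℂ)‖ ^ 2 :=
      ae_all_iff.mpr fun j => hae (φ j)
    exact hneg.quasiMeasurePreserving.ae (p := fun w => ∀ j : ℕ,
      (∑' i, lam₁ i * ‖(inner ℂ (φ j) (W w (ψ₁ i)) : ℂ)‖ ^ 2)
        = ∑' i, lam₂ i * ‖(inner ℂ (φ j) (W w (ψ₂ i)) : ℂ)‖ ^ 2) haej0
  -- pointwise identity for the double sums
  have hdouble : ∀ (lam : ℕ → ℝ) (ψs : ℕ → H), (∀ i, 0 ≤ lam i) → HasSum lam 1 →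
      (∀ i, ‖ψs i‖ = 1) → ∀ z : ℝ × ℝ,
      (∑' i, ∑' j, lam i * μ j * ‖(inner ℂ (ψs i) (W z (φ j)) : ℂ)‖ ^ 2)
        = ∑' j, μ j * ∑' i, lam i * ‖(inner ℂ (φ j) (W (-z) (ψs i)) : ℂ)‖ ^ 2 := by
    intro lam ψs hlam h1 hψ z
    have hsym : ∀ i j : ℕ, ‖(inner ℂ (ψs i) (W z (φ j)) : ℂ)‖
        = ‖(inner ℂ (φ j) (W (-z) (ψs i)) : ℂ)‖ := fun i j => aux_symm7 W hW (ψs i) (φ j) z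
    have hc1 : ∀ i j : ℕ, ‖(inner ℂ (ψs i) (W z (φ j)) : ℂ)‖ ^ 2 ≤ 1 := by
      intro i j
      have : ‖(inner ℂ (ψs i) (W z (φ j)) : ℂ)‖ ≤ 1 := by
        calc ‖(inner ℂ (ψs i) (W z (φ j)) : ℂ)‖ ≤ ‖ψs i‖ * ‖W z (φ j)‖ := norm_inner_le_norm _ _
          _ = 1 := by rw [aux_norm7 W hW, hψ i, hoφ.1 j, mul_one]
      calc ‖(inner ℂ (ψs i) (W z (φ j)) : ℂ)‖ ^ 2 ≤ 1 ^ 2 :=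
            pow_le_pow_left₀ (norm_nonneg _) this 2
        _ = 1 := one_pow 2
    have hU : Summable (Function.uncurry fun i j : ℕ =>
        lam i * μ j * ‖(inner ℂ (ψs i) (W z (φ j)) : ℂ)‖ ^ 2) := by
      refine Summable.of_nonneg_of_le (fun p => ?_) (fun p => ?_)
        (Summable.mul_of_nonneg h1.summable hμ1.summable hlam hμ)
      · exact mul_nonneg (mul_nonneg (hlam p.1) (hμ p.2)) (by positivity)
      · calc lam p.1 * μ p.2 * ‖(inner ℂ (ψs p.1) (W z (φ p.2)) : ℂ)‖ ^ 2
            ≤ lam p.1 * μ p.2 * 1 :=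
              mul_le_mul_of_nonneg_left (hc1 p.1 p.2) (mul_nonneg (hlam p.1) (hμ p.2))
          _ = lam p.1 * μ p.2 := mul_one _
    calc (∑' i, ∑' j, lam i * μ j * ‖(inner ℂ (ψs i) (W z (φ j)) : ℂ)‖ ^ 2)
        = ∑' j, ∑' i, lam i * μ j * ‖(inner ℂ (ψs i) (W z (φ j)) : ℂ)‖ ^ 2 :=
          (Summable.tsum_comm hU).symm
      _ = ∑' j, μ j * ∑' i, lam i * ‖(inner ℂ (φ j) (W (-z) (ψs i)) : ℂ)‖ ^ 2 := by
          refine tsum_congr fun j => ?_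
          rw [← tsum_mul_left]
          refine tsum_congr fun i => ?_
          rw [hsym i j]
          ring
  -- the integrands of the `G_S`-traces agree a.e.
  have hptwise : (fun z : ℝ × ℝ =>
        ∑' i, ∑' j, lam₁ i * μ j * ‖(inner ℂ (ψ₁ i) (W z (φ j)) : ℂ)‖ ^ 2)
      =ᵐ[(volume : Measure (ℝ × ℝ))]
      (fun z : ℝ × ℝ =>
        ∑' i, ∑' j, lam₂ i * μ j * ‖(inner ℂ (ψ₂ i) (W z (φ j)) : ℂ)‖ ^ 2) := by
    filter_upwards [haej] with z hz
    rw [hdouble lam₁ ψ₁ hlam₁ h₁1 ho₁.1 z, hdouble lam₂ ψ₂ hlam₂ h₂1 ho₂.1 z]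
    exact tsum_congr fun j => by rw [hz j]
  -- conclude via informational completeness
  refine hIC lam₁ lam₂ ψ₁ ψ₂ hlam₁ hlam₂ h₁1 h₂1 ho₁ ho₂ ?_
  intro Z hZ
  congr 1
  exact integral_congr_ae (ae_restrict_of_ae hptwise)
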